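/- arXiv:2002.03548 — 2 statements merged into one kernel-verified Lean document; each statement's English description precedes it below -/
import Mathlib

section
/- For every α ∈ M_m(ℂ) and every Hermitian matrix δ ∈ M_m(ℂ) (δᴴ = δ), the function ℝ → ℝ given by t ↦ ‖exp(tδ) · α · exp(−tδ)‖², where ‖·‖ is the Frobenius norm and exp is the matrix exponential, is convex on ℝ. -/
open Matrix

/-- The Frobenius norm of a complex `m × m` matrix. -/
noncomputable def frobNorm {m : ℕ} (A : Matrix (Fin m) (Fin m) ℂ) : ℝ :=
  Real.sqrt (∑ i, ∑ j, ‖A i j‖ ^ 2)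

/-- The matrix exponential `exp A = ∑ₖ Aᵏ / k!`. -/
noncomputable def mexp {m : ℕ} (A : Matrix (Fin m) (Fin m) ℂ) :
    Matrix (Fin m) (Fin m) ℂ :=
  ∑' k : ℕ, ((k.factorial : ℂ)⁻¹) • (A ^ k)

lemma mexp_eq_exp {m : ℕ} (A : Matrix (Fin m) (Fin m) ℂ) :
    mexp A = NormedSpace.exp A := by
  rw [NormedSpace.exp_eq_tsum (𝕂 := ℂ)]; rfl

lemma frobNorm_sq {m : ℕ} (A : Matrix (Fin m) (Fin m) ℂ) :
    frobNorm A ^ 2 = ∑ i, ∑ j, ‖A i j‖ ^ 2 :=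
  Real.sq_sqrt (by positivity)

lemma frobSum_eq_trace {m : ℕ} (A : Matrix (Fin m) (Fin m) ℂ) :
    ∑ i, ∑ j, ‖A i j‖ ^ 2 = ((Aᴴ * A).trace).re := by
  rw [Matrix.trace]
  simp only [Matrix.diag, Matrix.mul_apply, Matrix.conjTranspose_apply]
  rw [Complex.re_sum]
  rw [Finset.sum_comm]
  refine Finset.sum_congr rfl fun j _ => ?_
  rw [Complex.re_sum]
  refine Finset.sum_congr rfl fun i _ => ?_
  simp [Matrix.conjTranspose_apply, ← Complex.normSq_eq_norm_sq, Complex.normSq_apply,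
    Complex.mul_re, Complex.normSq]

lemma frobSum_conj {m : ℕ} (U A : Matrix (Fin m) (Fin m) ℂ)
    (hU : star U * U = 1) :
    ∑ i, ∑ j, ‖(U * A * star U) i j‖ ^ 2
      = ∑ i, ∑ j, ‖A i j‖ ^ 2 := by
  rw [frobSum_eq_trace, frobSum_eq_trace]
  congr 1
  have h1 : (U * A * star U)ᴴ * (U * A * star U) = U * (Aᴴ * A) * star U := by
    simp only [Matrix.star_eq_conjTranspose, Matrix.conjTranspose_mul,
      Matrix.conjTranspose_conjTranspose]
    have hU' : Uᴴ * U = 1 := hU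
    simp only [Matrix.mul_assoc]
    rw [← Matrix.mul_assoc Uᴴ U (A * Uᴴ), hU', Matrix.one_mul]
  rw [h1, Matrix.trace_mul_cycle, ← Matrix.mul_assoc, hU, Matrix.one_mul]

lemma convexOn_exp_mul (a : ℝ) : ConvexOn ℝ Set.univ fun t : ℝ => Real.exp (a * t) := by
  refine ⟨convex_univ, fun x _ y _ p q hp hq hpq => ?_⟩
  have h := convexOn_exp.2 (Set.mem_univ (a * x)) (Set.mem_univ (a * y)) hp hq hpq
  simp only [smul_eq_mul] at h ⊢
  rw [show a * (p * x + q * y) = p * (a * x) + q * (a * y) from by ring]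
  exact h

lemma convexOn_finset_sum {ι : Type*} (s : Finset ι) (f : ι → ℝ → ℝ)
    (h : ∀ i ∈ s, ConvexOn ℝ Set.univ (f i)) :
    ConvexOn ℝ Set.univ fun t => ∑ i ∈ s, f i t := by
  classical
  induction s using Finset.induction_on with
  | empty => simpa using convexOn_const (0 : ℝ) convex_univ
  | insert _ _ hnot ih =>
    simp_rw [Finset.sum_insert hnot]
    exact (h _ (Finset.mem_insert_self _ _)).add
      (ih fun i hi => h i (Finset.mem_insert_of_mem hi))

/-- The convexity computation in the proof of Lemma 5.1: for any matrix `α`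
and any Hermitian matrix `δ`, the function
`t ↦ ‖exp(tδ) α exp(−tδ)‖²` (Frobenius norm) is convex on `ℝ`. -/
theorem stmt_6 (m : ℕ) (α δ : Matrix (Fin m) (Fin m) ℂ) (hδ : δᴴ = δ) :
    ConvexOn ℝ Set.univ
      (fun t : ℝ => frobNorm (mexp (t • δ) * α * mexp (-(t • δ))) ^ 2) := by
  have hA : δ.IsHermitian := hδ
  set U : Matrix (Fin m) (Fin m) ℂ := (hA.eigenvectorUnitary : Matrix (Fin m) (Fin m) ℂ) with hUdef
  set d : Fin m → ℝ := hA.eigenvalues with hddef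
  have hU : star U * U = 1 := Unitary.coe_star_mul_self hA.eigenvectorUnitary
  have hU' : U * star U = 1 := Unitary.coe_mul_star_self hA.eigenvectorUnitary
  let u : (Matrix (Fin m) (Fin m) ℂ)ˣ := ⟨U, star U, hU', hU⟩
  have hconj : ∀ t : ℝ, t • δ = U * diagonal (fun i => ((t * d i : ℝ) : ℂ)) * star U := by
    intro t
    have h1 : (fun i : Fin m => ((t * d i : ℝ) : ℂ)) = t • (RCLike.ofReal ∘ d) := by
      funext i
      simp [Complex.real_smul, Complex.ofReal_mul]
    rw [h1, Matrix.diagonal_smul, mul_smul_comm, smul_mul_assoc]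
    conv_lhs => rw [hA.spectral_theorem]
    rfl
  have hexp : ∀ t : ℝ, mexp (t • δ)
      = U * diagonal (fun i => Complex.exp (((t * d i : ℝ) : ℂ))) * star U := by
    intro t
    rw [mexp_eq_exp, hconj t,
      show (U : Matrix (Fin m) (Fin m) ℂ) = ↑u from rfl,
      show (star U : Matrix (Fin m) (Fin m) ℂ) = ↑u⁻¹ from rfl,
      Matrix.exp_units_conj u, Matrix.exp_diagonal, Pi.exp_def]
    simp only [← Complex.exp_eq_exp_ℂ]
  have key : ∀ t : ℝ, frobNorm (mexp (t • δ) * α * mexp (-(t • δ))) ^ 2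
      = ∑ i, ∑ j, ‖(star U * α * U) i j‖ ^ 2
          * Real.exp ((2 * (d i - d j)) * t) := by
    intro t
    rw [show -(t • δ) = (-t) • δ from (neg_smul t δ).symm, frobNorm_sq, hexp t, hexp (-t)]
    have hmat : (U * diagonal (fun i => Complex.exp (((t * d i : ℝ) : ℂ))) * star U) * α *
        (U * diagonal (fun i => Complex.exp ((((-t) * d i : ℝ) : ℂ))) * star U)
        = U * (diagonal (fun i => Complex.exp (((t * d i : ℝ) : ℂ))) * (star U * α * U) *
               diagonal (fun i => Complex.exp ((((-t) * d i : ℝ) : ℂ)))) * star U := by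
      simp only [Matrix.mul_assoc]
    rw [hmat, frobSum_conj _ _ hU]
    refine Finset.sum_congr rfl fun i _ => Finset.sum_congr rfl fun j _ => ?_
    rw [Matrix.mul_diagonal, Matrix.diagonal_mul, norm_mul, norm_mul,
      Complex.norm_exp, Complex.norm_exp]
    simp only [Complex.ofReal_re]
    rw [show (2 * (d i - d j)) * t = (t * d i + t * d i) + (-t * d j + -t * d j) from by ring,
      Real.exp_add, Real.exp_add, Real.exp_add]
    ring
  rw [funext key]
  refine convexOn_finset_sum _ _ fun i _ => ?_
  refine convexOn_finset_sum _ _ fun j _ => ?_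
  have := (convexOn_exp_mul (2 * (d i - d j))).smul
    (c := ‖(star U * α * U) i j‖ ^ 2) (by positivity)
  simpa [smul_eq_mul] using this
end

section
/- For every α ∈ M_m(ℂ), let K be the closure in M_m(ℂ) of the conjugation orbit {g·α·g⁻¹ : g ∈ GL_m(ℂ)}. Then there exists β ∈ K with ‖β‖ ≤ ‖x‖ for all x ∈ K, and every β ∈ K attaining this minimal Frobenius norm over K is a normal matrix. -/
open Matrix

/-- The squared Frobenius norm. -/
noncomputable def fsq {m : ℕ} (A : Matrix (Fin m) (Fin m) ℂ) : ℝ :=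
  ∑ i, ∑ j, ‖A i j‖ ^ 2

lemma fsq_nonneg {m : ℕ} (A : Matrix (Fin m) (Fin m) ℂ) : 0 ≤ fsq A := by
  refine Finset.sum_nonneg fun i _ => Finset.sum_nonneg fun j _ => ?_
  positivity

lemma frobNorm_eq {m : ℕ} (A : Matrix (Fin m) (Fin m) ℂ) :
    frobNorm A = Real.sqrt (fsq A) := rfl

lemma fsq_eq_sq {m : ℕ} (A : Matrix (Fin m) (Fin m) ℂ) :
    fsq A = (frobNorm A) ^ 2 := by
  rw [frobNorm_eq, Real.sq_sqrt (fsq_nonneg A)]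

lemma fsq_eq_trace {m : ℕ} (A : Matrix (Fin m) (Fin m) ℂ) :
    fsq A = (Matrix.trace (Aᴴ * A)).re := by
  unfold fsq
  rw [Matrix.trace, Complex.re_sum, Finset.sum_comm]
  refine Finset.sum_congr rfl fun j _ => ?_
  rw [Matrix.diag_apply, Matrix.mul_apply, Complex.re_sum]
  refine Finset.sum_congr rfl fun i _ => ?_
  rw [Matrix.conjTranspose_apply, Complex.sq_norm]
  simp [mul_comm, Complex.mul_conj]

lemma fsq_eq_zero {m : ℕ} {A : Matrix (Fin m) (Fin m) ℂ} (h : fsq A = 0) : A = 0 := by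
  ext i j
  have h1 : ∀ i ∈ Finset.univ, (0:ℝ) ≤ ∑ j, ‖A i j‖ ^ 2 :=
    fun i _ => Finset.sum_nonneg fun j _ => by positivity
  have h2 := (Finset.sum_eq_zero_iff_of_nonneg h1).mp h i (Finset.mem_univ i)
  have h3 : ∀ j ∈ Finset.univ, (0:ℝ) ≤ ‖A i j‖ ^ 2 := fun j _ => by positivity
  have h4 := (Finset.sum_eq_zero_iff_of_nonneg h3).mp h2 j (Finset.mem_univ j)
  have h5 : ‖A i j‖ = 0 := by
    have := pow_eq_zero_iff (n := 2) (by norm_num) |>.mp h4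
    exact this
  simpa using norm_eq_zero.mp h5

lemma fsq_add_smul {m : ℕ} (A C : Matrix (Fin m) (Fin m) ℂ) (t : ℝ) :
    fsq (A + t • C) = fsq A + 2 * t * (Matrix.trace (Aᴴ * C)).re + t ^ 2 * fsq C := by
  unfold fsq
  have key : ∀ i j, ‖(A + t • C) i j‖ ^ 2 =
      ‖A i j‖ ^ 2 + 2 * t * ((starRingEnd ℂ) (A i j) * C i j).re
        + t ^ 2 * ‖C i j‖ ^ 2 := by
    intro i j
    rw [Matrix.add_apply, Matrix.smul_apply, Complex.sq_norm, Complex.sq_norm, Complex.sq_norm]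
    rw [Complex.normSq_add]
    have h1 : (t • C i j) = (t : ℂ) * C i j := by
      simp [Complex.real_smul]
    rw [h1, Complex.normSq_mul]
    have h2 : Complex.normSq (t:ℂ) = t ^ 2 := by
      simp [Complex.normSq_apply]; ring
    have h3 : (A i j * (starRingEnd ℂ) ((t:ℂ) * C i j)).re
        = t * ((starRingEnd ℂ) (A i j) * C i j).re := by
      simp only [Complex.mul_re, Complex.mul_im, Complex.conj_re, Complex.conj_im,
        Complex.ofReal_re, Complex.ofReal_im]
      ring
    rw [h2, h3]
    ring
  simp_rw [key, Finset.sum_add_distrib, ← Finset.mul_sum]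
  congr 1
  · congr 1
    rw [Matrix.trace, Complex.re_sum, Finset.sum_comm]
    congr 1
    refine Finset.sum_congr rfl fun j _ => ?_
    rw [Matrix.diag_apply, Matrix.mul_apply, Complex.re_sum]
    refine Finset.sum_congr rfl fun i _ => ?_
    rw [Matrix.conjTranspose_apply]
    rfl

/-- First-order optimality implies vanishing of the real part of the trace pairing. -/
lemma key_lemma {m : ℕ} (β X : Matrix (Fin m) (Fin m) ℂ)
    (hmin : ∀ t : ℝ, IsUnit ((1 + t • X : Matrix (Fin m) (Fin m) ℂ)).det →
      fsq β ≤ fsq ((1 + t • X) * β * (1 + t • X)⁻¹)) :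
    (Matrix.trace (βᴴ * (X * β - β * X))).re = 0 := by
  set g : ℝ → Matrix (Fin m) (Fin m) ℂ := fun t => 1 + t • X with hgdef
  have hg : Continuous g := by
    apply continuous_const.add
    exact continuous_matrix fun i j => by
      simp only [Matrix.smul_apply]
      exact (continuous_id.smul continuous_const)
  have hg0 : g 0 = 1 := by simp [hgdef]
  have hdet : ContinuousAt (fun t => (g t).det) 0 := (hg.matrix_det).continuousAt
  have hdet0 : (g 0).det = 1 := by rw [hg0, Matrix.det_one]
  have hne : ∀ᶠ t in nhds (0:ℝ), (g t).det ≠ 0 :=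
    hdet.eventually_ne (by rw [hdet0]; exact one_ne_zero)
  have hinv : ContinuousAt (fun t => (g t)⁻¹) 0 := by
    have h1 : ContinuousAt Inv.inv (g 0) := by
      apply continuousAt_matrix_inv
      rw [hdet0]
      have := NormedRing.inverse_continuousAt (1 : ℂˣ)
      simpa using this
    exact h1.comp hg.continuousAt
  set C : ℝ → Matrix (Fin m) (Fin m) ℂ := fun t => (X * β - β * X) * (g t)⁻¹ with hCdef
  have hC : ContinuousAt C 0 := by
    have houter : Continuous (fun A : Matrix (Fin m) (Fin m) ℂ => (X * β - β * X) * A) :=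
      continuous_const.matrix_mul continuous_id
    exact houter.continuousAt.comp hinv
  set φ : ℝ → ℝ := fun t => (Matrix.trace (βᴴ * C t)).re with hφdef
  set ψ : ℝ → ℝ := fun t => fsq (C t) with hψdef
  have hφ : ContinuousAt φ 0 := by
    have houter : Continuous (fun A : Matrix (Fin m) (Fin m) ℂ => (Matrix.trace (βᴴ * A)).re) :=
      Complex.continuous_re.comp ((continuous_const.matrix_mul continuous_id).matrix_trace)
    exact houter.continuousAt.comp hC
  have hfsq : Continuous (fsq (m := m)) := by
    apply continuous_finset_sum
    intro i _
    apply continuous_finset_sum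
    intro j _
    exact (continuous_norm.comp (continuous_id.matrix_elem i j)).pow 2
  have hψ : ContinuousAt ψ 0 := hfsq.continuousAt.comp hC
  have hmain : ∀ᶠ t in nhds (0:ℝ), 0 ≤ 2 * t * φ t + t ^ 2 * ψ t := by
    filter_upwards [hne] with t ht
    have hu : IsUnit (g t).det := isUnit_iff_ne_zero.mpr ht
    have h1 : g t * β = β * g t + t • (X * β - β * X) := by
      simp only [hgdef, add_mul, mul_add, one_mul, mul_one, smul_mul_assoc,
        mul_smul_comm, smul_sub]
      abel
    have hexp : g t * β * (g t)⁻¹ = β + t • C t := by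
      calc g t * β * (g t)⁻¹ = (β * g t + t • (X * β - β * X)) * (g t)⁻¹ := by rw [h1]
        _ = β * (g t * (g t)⁻¹) + t • ((X * β - β * X) * (g t)⁻¹) := by
            rw [add_mul, smul_mul_assoc, mul_assoc]
        _ = β + t • C t := by rw [Matrix.mul_nonsing_inv _ hu, mul_one, hCdef]
    have hle := hmin t hu
    rw [show (1 + t • X : Matrix (Fin m) (Fin m) ℂ) = g t from rfl, hexp,
      fsq_add_smul] at hle
    simp only [hφdef, hψdef]
    linarith
  set F : ℝ → ℝ := fun t => 2 * φ t + t * ψ t with hFdef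
  have hF : ContinuousAt F 0 := ((continuousAt_const.mul hφ)).add (continuousAt_id.mul hψ)
  have hF0 : F 0 = 2 * φ 0 := by simp [hFdef]
  have hid : ∀ t : ℝ, 2 * t * φ t + t ^ 2 * ψ t = t * F t := by
    intro t; simp only [hFdef]; ring
  have hpos : 0 ≤ F 0 := by
    have h1 : ∀ᶠ t in nhdsWithin (0:ℝ) (Set.Ioi 0), 0 ≤ F t := by
      filter_upwards [hmain.filter_mono nhdsWithin_le_nhds, self_mem_nhdsWithin] with t h2 ht
      rw [hid t] at h2
      exact le_of_mul_le_mul_left (by rw [mul_zero]; exact h2) ht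
    exact ge_of_tendsto (hF.mono_left nhdsWithin_le_nhds) h1
  have hneg : F 0 ≤ 0 := by
    have h1 : ∀ᶠ t in nhdsWithin (0:ℝ) (Set.Iio 0), F t ≤ 0 := by
      filter_upwards [hmain.filter_mono nhdsWithin_le_nhds, self_mem_nhdsWithin] with t h2 ht
      rw [hid t] at h2
      by_contra h'
      push_neg at h'
      exact absurd h2 (not_le.mpr (mul_neg_of_neg_of_pos ht h'))
    exact le_of_tendsto (hF.mono_left nhdsWithin_le_nhds) h1
  have hφ0 : φ 0 = 0 := by
    have : F 0 = 0 := le_antisymm hneg hpos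
    rw [hF0] at this; linarith
  have hC0 : C 0 = X * β - β * X := by
    simp only [hCdef, hg0, inv_one, mul_one]
  rw [hφdef] at hφ0
  simp only [hC0] at hφ0
  exact hφ0

attribute [local instance] Matrix.normedAddCommGroup Matrix.normedSpace

lemma frobNorm_continuous {m : ℕ} : Continuous (frobNorm (m := m)) := by
  apply Real.continuous_sqrt.comp
  apply continuous_finset_sum
  intro i _
  apply continuous_finset_sum
  intro j _
  exact (continuous_norm.comp (continuous_id.matrix_elem i j)).pow 2

lemma entry_le_frobNorm {m : ℕ} (x : Matrix (Fin m) (Fin m) ℂ) (i j : Fin m) :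
    ‖x i j‖ ≤ frobNorm x := by
  rw [frobNorm_eq]
  rw [Real.le_sqrt (norm_nonneg _) (fsq_nonneg x)]
  calc ‖x i j‖ ^ 2 ≤ ∑ j', ‖x i j'‖ ^ 2 :=
        Finset.single_le_sum (f := fun j' => ‖x i j'‖ ^ 2)
          (fun j' _ => by positivity) (Finset.mem_univ j)
    _ ≤ fsq x :=
        Finset.single_le_sum (f := fun i' => ∑ j', ‖x i' j'‖ ^ 2)
          (fun i' _ => Finset.sum_nonneg fun j' _ => by positivity) (Finset.mem_univ i)

/-- The Kempf–Ness fact in the adjoint model: the closure `K` of the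
conjugation orbit of any `α ∈ M_m(ℂ)` contains a point of smallest Frobenius
norm, and every point of `K` of smallest norm is a normal matrix. -/
theorem stmt_9 (m : ℕ) (α : Matrix (Fin m) (Fin m) ℂ)
    (K : Set (Matrix (Fin m) (Fin m) ℂ))
    (hK : K = closure {β : Matrix (Fin m) (Fin m) ℂ |
      ∃ g : (Matrix (Fin m) (Fin m) ℂ)ˣ,
        β = (g : Matrix (Fin m) (Fin m) ℂ) * α *
          (↑g⁻¹ : Matrix (Fin m) (Fin m) ℂ)}) :
    (∃ β ∈ K, ∀ x ∈ K, frobNorm β ≤ frobNorm x) ∧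
      ∀ β ∈ K, (∀ x ∈ K, frobNorm β ≤ frobNorm x) → β * βᴴ = βᴴ * β := by
  classical
  have hconj : ∀ u : (Matrix (Fin m) (Fin m) ℂ)ˣ, ∀ x ∈ K,
      (u : Matrix (Fin m) (Fin m) ℂ) * x * (↑u⁻¹ : Matrix (Fin m) (Fin m) ℂ) ∈ K := by
    intro u x hx
    rw [hK] at hx ⊢
    have hc : Continuous (fun y : Matrix (Fin m) (Fin m) ℂ =>
        (u : Matrix (Fin m) (Fin m) ℂ) * y * (↑u⁻¹ : Matrix (Fin m) (Fin m) ℂ)) :=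
      (continuous_const.matrix_mul continuous_id).matrix_mul continuous_const
    refine map_mem_closure (f := fun y : Matrix (Fin m) (Fin m) ℂ =>
        (u : Matrix (Fin m) (Fin m) ℂ) * y * (↑u⁻¹ : Matrix (Fin m) (Fin m) ℂ)) hc hx ?_
    rintro y ⟨g, rfl⟩
    exact ⟨u * g, by simp [_root_.mul_inv_rev, Units.val_mul, mul_assoc]⟩
  have hαK : α ∈ K := by
    rw [hK]; exact subset_closure ⟨1, by simp⟩
  have hKclosed : IsClosed K := hK ▸ isClosed_closure
  -- existence of a minimizer
  have hex : ∃ β ∈ K, ∀ x ∈ K, frobNorm β ≤ frobNorm x := by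
    set S : Set (Matrix (Fin m) (Fin m) ℂ) := K ∩ {x | frobNorm x ≤ frobNorm α} with hSdef
    have hSclosed : IsClosed S :=
      hKclosed.inter (isClosed_le frobNorm_continuous continuous_const)
    have hSbdd : Bornology.IsBounded S := by
      rw [isBounded_iff_forall_norm_le]
      refine ⟨max (frobNorm α) 0, fun x hx => ?_⟩
      rw [Matrix.norm_le_iff (le_max_right _ _)]
      intro i j
      calc ‖x i j‖ = ‖x i j‖ := rfl
        _ ≤ frobNorm x := entry_le_frobNorm x i j
        _ ≤ frobNorm α := hx.2
        _ ≤ max (frobNorm α) 0 := le_max_left _ _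
    have hScompact : IsCompact S := Metric.isCompact_of_isClosed_isBounded hSclosed hSbdd
    have hSne : S.Nonempty := ⟨α, hαK, Set.mem_setOf_eq ▸ le_rfl⟩
    obtain ⟨β, hβS, hβmin⟩ :=
      hScompact.exists_isMinOn hSne frobNorm_continuous.continuousOn
    refine ⟨β, hβS.1, fun x hx => ?_⟩
    by_cases hcase : frobNorm x ≤ frobNorm α
    · exact hβmin ⟨hx, hcase⟩
    · exact le_trans (hβmin ⟨hαK, Set.mem_setOf_eq ▸ le_rfl⟩) (le_of_not_ge hcase)
  refine ⟨hex, fun β hβ hβmin => ?_⟩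
  -- fsq minimality on conjugates
  have hfsqmin : ∀ X : Matrix (Fin m) (Fin m) ℂ, ∀ t : ℝ,
      IsUnit ((1 + t • X : Matrix (Fin m) (Fin m) ℂ)).det →
      fsq β ≤ fsq ((1 + t • X) * β * (1 + t • X)⁻¹) := by
    intro X t hu
    set u : (Matrix (Fin m) (Fin m) ℂ)ˣ := Matrix.nonsingInvUnit _ hu with hudef
    have h1 : (u : Matrix (Fin m) (Fin m) ℂ) = 1 + t • X := rfl
    have h2 : (↑u⁻¹ : Matrix (Fin m) (Fin m) ℂ) = (1 + t • X)⁻¹ := rfl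
    have hmem := hconj u β hβ
    rw [h1, h2] at hmem
    have hle := hβmin _ hmem
    rw [fsq_eq_sq, fsq_eq_sq]
    exact pow_le_pow_left₀ (Real.sqrt_nonneg _) hle 2
  have hRe : ∀ X : Matrix (Fin m) (Fin m) ℂ,
      (Matrix.trace (βᴴ * (X * β - β * X))).re = 0 :=
    fun X => key_lemma β X (hfsqmin X)
  have hTr : ∀ X : Matrix (Fin m) (Fin m) ℂ,
      Matrix.trace (βᴴ * (X * β - β * X)) = 0 := by
    intro X
    have h1 := hRe X
    have h2 := hRe (Complex.I • X)
    have h3 : (Complex.I • X) * β - β * (Complex.I • X)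
        = Complex.I • (X * β - β * X) := by
      rw [smul_mul_assoc, mul_smul_comm, smul_sub]
    rw [h3, mul_smul_comm, Matrix.trace_smul, smul_eq_mul] at h2
    have h4 : (Complex.I * Matrix.trace (βᴴ * (X * β - β * X))).re
        = -(Matrix.trace (βᴴ * (X * β - β * X))).im := by
      simp [Complex.mul_re]
    rw [h4] at h2
    have him : (Matrix.trace (βᴴ * (X * β - β * X))).im = 0 := by linarith
    exact Complex.ext (by simpa using h1) (by simpa using him)
  have hTr2 : ∀ X : Matrix (Fin m) (Fin m) ℂ,
      Matrix.trace ((β * βᴴ - βᴴ * β) * X) = 0 := by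
    intro X
    have h1 := hTr X
    rw [mul_sub, Matrix.trace_sub] at h1
    rw [sub_mul, Matrix.trace_sub]
    have e1 : Matrix.trace (β * βᴴ * X) = Matrix.trace (βᴴ * (X * β)) := by
      rw [Matrix.trace_mul_comm (β * βᴴ) X, ← Matrix.mul_assoc,
        Matrix.trace_mul_comm (X * β) βᴴ]
    have e2 : Matrix.trace (βᴴ * β * X) = Matrix.trace (βᴴ * (β * X)) := by
      rw [Matrix.mul_assoc]
    rw [e1, e2]
    exact h1
  set D : Matrix (Fin m) (Fin m) ℂ := β * βᴴ - βᴴ * β with hDdef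
  have hD : Matrix.trace (D * Dᴴ) = 0 := hTr2 Dᴴ
  have hfD : fsq Dᴴ = 0 := by
    rw [fsq_eq_trace, Matrix.conjTranspose_conjTranspose, hD]
    rfl
  have hD0 : D = 0 := Matrix.conjTranspose_eq_zero.mp (fsq_eq_zero hfD)
  have := sub_eq_zero.mp hD0
  exact this
end
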